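/- Let K be a field of characteristic 0, u,v ∈ K[x,y] with deg v ≥ 1, and q a one-variable polynomial over K. If the total degree of u+q(v) is strictly greater than the total degree of u, then deg(u+q(v)) = deg q · deg v. -/

import Mathlib

open MvPolynomial

noncomputable def Dlex : (Fin 2 →₀ ℕ) → Lex (ℕ × ℕ) := fun m => toLex (m 0 + m 1, m 0)

lemma Dlex_inj : Function.Injective Dlex := by
  intro a b h
  have h' := toLex.symm.injective.eq_iff.mpr h
  simp only [Dlex, Equiv.symm_apply_apply, Prod.mk.injEq, ofLex_toLex] at h' ⊢
  ext i
  fin_cases i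
  · exact h'.2
  · show a 1 = b 1
    omega

lemma Dlex_add : ∀ a b : (Fin 2 →₀ ℕ), Dlex (a + b) = Dlex a + Dlex b := by
  intro a b
  simp only [Dlex, Finsupp.add_apply, ← toLex_add, Prod.mk_add_mk]
  congr 1
  ext <;> simp <;> ring

lemma degsum (m : Fin 2 →₀ ℕ) : (m.sum fun _ e => e) = m 0 + m 1 := by
  rw [Finsupp.sum_fintype _ _ (fun _ => rfl)]
  exact Fin.sum_univ_two _

lemma totalDegree_eq_fst {K : Type*} [Field K] (p : MvPolynomial (Fin 2) K) :
    p.totalDegree = (ofLex (AddMonoidAlgebra.supDegree Dlex p)).1 := by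
  rcases eq_or_ne p 0 with rfl | hp
  · simp [AddMonoidAlgebra.supDegree_zero]
    rfl
  apply le_antisymm
  · apply Finset.sup_le
    intro m hm
    have := Finset.le_sup (f := Dlex) hm
    have h1 : (ofLex (Dlex m)).1 ≤ (ofLex (AddMonoidAlgebra.supDegree Dlex p)).1 := by
      rcases (Prod.Lex.le_iff).1 this with h' | h'
      · exact h'.le
      · exact h'.1.le
    simpa [degsum, Dlex] using h1
  · obtain ⟨m, hm, he⟩ := AddMonoidAlgebra.exists_supDegree_mem_support Dlex hp
    rw [he]
    have := MvPolynomial.le_totalDegree (s := m) hm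
    simpa [degsum, Dlex] using this

lemma totalDegree_mul_eq {K : Type*} [Field K] {p q : MvPolynomial (Fin 2) K}
    (hp : p ≠ 0) (hq : q ≠ 0) :
    (p * q).totalDegree = p.totalDegree + q.totalDegree := by
  have hpq : AddMonoidAlgebra.leadingCoeff Dlex p * AddMonoidAlgebra.leadingCoeff Dlex q ≠ 0 :=
    mul_ne_zero ((AddMonoidAlgebra.leadingCoeff_ne_zero Dlex_inj).2 hp)
      ((AddMonoidAlgebra.leadingCoeff_ne_zero Dlex_inj).2 hq)
  have := AddMonoidAlgebra.supDegree_mul Dlex_inj Dlex_add hpq hp hq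
  rw [totalDegree_eq_fst, totalDegree_eq_fst, totalDegree_eq_fst, this]
  rfl

lemma totalDegree_pow_eq {K : Type*} [Field K] {v : MvPolynomial (Fin 2) K}
    (hv : v ≠ 0) (n : ℕ) : (v ^ n).totalDegree = n * v.totalDegree := by
  induction n with
  | zero => simp
  | succ n ih =>
    rw [pow_succ, totalDegree_mul_eq (pow_ne_zero _ hv) hv, ih]
    ring

lemma totalDegree_aeval_le {K : Type*} [Field K] (v : MvPolynomial (Fin 2) K)
    (q : Polynomial K) :
    (Polynomial.aeval v q).totalDegree ≤ q.natDegree * v.totalDegree := by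
  rw [Polynomial.aeval_def, Polynomial.eval₂_eq_sum, Polynomial.sum_def]
  apply le_trans (MvPolynomial.totalDegree_finset_sum _ _)
  apply Finset.sup_le
  intro i hi
  apply le_trans (MvPolynomial.totalDegree_mul _ _)
  have h1 : (algebraMap K (MvPolynomial (Fin 2) K) (q.coeff i)).totalDegree = 0 :=
    MvPolynomial.totalDegree_C _
  rw [h1, zero_add]
  exact le_trans (MvPolynomial.totalDegree_pow _ _)
    (Nat.mul_le_mul_right _ (Polynomial.le_natDegree_of_mem_supp i hi))

lemma totalDegree_aeval_eq {K : Type*} [Field K] {v : MvPolynomial (Fin 2) K}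
    (hv : 1 ≤ v.totalDegree) {q : Polynomial K} (hq : q ≠ 0) :
    (Polynomial.aeval v q).totalDegree = q.natDegree * v.totalDegree := by
  have hv0 : v ≠ 0 := by rintro rfl; simp at hv
  rcases Nat.eq_zero_or_pos q.natDegree with h0 | h1
  · obtain ⟨a, rfl⟩ := Polynomial.natDegree_eq_zero.mp h0
    have : a ≠ 0 := by rintro rfl; simp at hq
    simp [h0]
  · set n := q.natDegree with hn
    have key : Polynomial.aeval v q =
        Polynomial.aeval v q.eraseLead + MvPolynomial.C q.leadingCoeff * v ^ n := by
      conv_lhs => rw [← Polynomial.eraseLead_add_C_mul_X_pow q]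
      rw [map_add, map_mul, map_pow, Polynomial.aeval_X, Polynomial.aeval_C,
        MvPolynomial.algebraMap_eq]
    have hlc : (MvPolynomial.C q.leadingCoeff : MvPolynomial (Fin 2) K) ≠ 0 := by
      simpa using Polynomial.leadingCoeff_ne_zero.mpr hq
    have hdeg2 : (MvPolynomial.C q.leadingCoeff * v ^ n).totalDegree = n * v.totalDegree := by
      rw [totalDegree_mul_eq hlc (pow_ne_zero _ hv0), MvPolynomial.totalDegree_C,
        totalDegree_pow_eq hv0, zero_add]
    have hdeg1 : (Polynomial.aeval v q.eraseLead).totalDegree < n * v.totalDegree := by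
      refine lt_of_le_of_lt (totalDegree_aeval_le v _) ?_
      have he : q.eraseLead.natDegree ≤ n - 1 := Polynomial.eraseLead_natDegree_le q
      have : q.eraseLead.natDegree * v.totalDegree ≤ (n - 1) * v.totalDegree :=
        Nat.mul_le_mul_right _ he
      refine lt_of_le_of_lt this ?_
      have : (n - 1) * v.totalDegree < n * v.totalDegree := by
        apply Nat.mul_lt_mul_of_lt_of_le (by omega) le_rfl (by omega)
      exact this
    rw [key, MvPolynomial.totalDegree_add_eq_right_of_totalDegree_lt (hdeg2 ▸ hdeg1), hdeg2]

/-- If `deg v ≥ 1` and the total degree of `u + q(v)` is strictly greater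
than the total degree of `u`, then `deg (u + q(v)) = deg q · deg v`. -/
theorem totalDegree_add_comp_of_lt {K : Type*} [Field K] [CharZero K]
    (u v : MvPolynomial (Fin 2) K) (hv : 1 ≤ v.totalDegree) (q : Polynomial K)
    (h : u.totalDegree < (u + Polynomial.aeval v q).totalDegree) :
    (u + Polynomial.aeval v q).totalDegree = q.natDegree * v.totalDegree := by
  rcases eq_or_ne q 0 with rfl | hq
  · simp at h
  have hdeg : (Polynomial.aeval v q).totalDegree = q.natDegree * v.totalDegree :=
    totalDegree_aeval_eq hv hq
  have hlt : u.totalDegree < (Polynomial.aeval v q).totalDegree := by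
    by_contra hle
    push_neg at hle
    have := MvPolynomial.totalDegree_add u (Polynomial.aeval v q)
    omega
  rw [MvPolynomial.totalDegree_add_eq_right_of_totalDegree_lt hlt, hdeg]
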